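/- Let A and B be nonempty closed convex subsets of X, set T := P_B ∘ P_A, and suppose T has no fixed point. Set R := (rec A) ∩ (rec B). Then neither R nor R^⊕ is a linear subspace of X (i.e. neither set is the carrier of a submodule of X). -/

import Mathlib

set_option linter.unusedSectionVars false
set_option maxHeartbeats 1600000

open Filter Topology

variable {X : Type*} [NormedAddCommGroup X] [InnerProductSpace ℝ X] [FiniteDimensional ℝ X]

/-- `P` is the projector onto the set `C`: `P x` is a point of `C` nearest to `x`. -/
def IsProjector (C : Set X) (P : X → X) : Prop :=
  ∀ x : X, P x ∈ C ∧ ∀ y ∈ C, ‖x - P x‖ ≤ ‖x - y‖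

/-- The recession cone `rec S = {x : x + S ⊆ S}` of a set `S`. -/
def recCone (S : Set X) : Set X := {x : X | ∀ s ∈ S, x + s ∈ S}

/-- `S^⊕ = −(S^⊖) = {x : ⟪x, s⟫ ≥ 0 for all s ∈ S}`. -/
def plusCone (S : Set X) : Set X := {x : X | ∀ s ∈ S, (0 : ℝ) ≤ inner ℝ x s}


lemma recCone_zero_mem {A : Set X} : (0 : X) ∈ recCone A := fun s hs => by simpa using hs

lemma recCone_add {A : Set X} {x y : X} (hx : x ∈ recCone A) (hy : y ∈ recCone A) :
    x + y ∈ recCone A := fun s hs => by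
  have := hx (y + s) (hy s hs); simpa [add_assoc] using this

lemma recCone_smul {A : Set X} (hAconv : Convex ℝ A) {x : X} (hx : x ∈ recCone A)
    {c : ℝ} (hc : 0 ≤ c) : c • x ∈ recCone A := by
  intro s hs
  -- pick n ≥ c, n ≥ 1
  obtain ⟨n, hn⟩ := exists_nat_ge c
  have hn1 : (1:ℝ) ≤ (n:ℝ) + 1 := by simp [Nat.cast_nonneg]
  have hnx : ((n:ℝ) + 1) • x + s ∈ A := by
    -- (n+1) • x + s ∈ A by induction
    have : ∀ m : ℕ, (m:ℝ) • x + s ∈ A := by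
      intro m
      induction m with
      | zero => simpa using hs
      | succ k ih =>
        have := hx _ ih
        have h2 : x + ((k:ℝ) • x + s) = ((k:ℝ)+1) • x + s := by
          rw [add_smul]; ring_nf; module
        rw [h2] at this
        push_cast
        exact this
    have := this (n+1); push_cast at this; exact this
  -- convex combination
  set N : ℝ := (n:ℝ) + 1 with hN
  have hNpos : 0 < N := by positivity
  have ht0 : 0 ≤ c / N := div_nonneg hc hNpos.le
  have ht1 : c / N ≤ 1 := by
    rw [div_le_one hNpos]; linarith
  have := hAconv hnx hs ht0 (by linarith : (0:ℝ) ≤ 1 - c / N) (by ring)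
  have heq : (c / N) • (N • x + s) + (1 - c / N) • s = c • x + s := by
    rw [smul_add, smul_smul, div_mul_cancel₀]
    · module
    · exact hNpos.ne'
  rwa [heq] at this

lemma recCone_isClosed {A : Set X} (hA : IsClosed A) : IsClosed (recCone A) := by
  have : recCone A = ⋂ s ∈ A, {x : X | x + s ∈ A} := by
    ext x; simp [recCone]
  rw [this]
  exact isClosed_biInter fun s hs => (hA.preimage (continuous_id.add continuous_const))


lemma key_bounded (A B : Set X) (hAcl : IsClosed A) (hAconv : Convex ℝ A)
    (hBcl : IsClosed B) (hBconv : Convex ℝ B) (W : Submodule ℝ X)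
    (hW : (W : Set X) = recCone A ∩ recCone B) (c : ℝ) :
    Bornology.IsBounded {p : X × X | p.1 ∈ A ∩ (Wᗮ : Set X) ∧ p.2 ∈ B ∩ (Wᗮ : Set X)
      ∧ ‖p.1 - p.2‖ ≤ c} := by
  by_contra hub
  rw [isBounded_iff_forall_norm_le] at hub
  push_neg at hub
  -- choose sequence
  have hch : ∀ n : ℕ, ∃ p : X × X, (p.1 ∈ A ∩ (Wᗮ : Set X) ∧ p.2 ∈ B ∩ (Wᗮ : Set X)
      ∧ ‖p.1 - p.2‖ ≤ c) ∧ (n : ℝ) + |c| + 1 < ‖p‖ := by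
    intro n
    obtain ⟨p, hp, hlt⟩ := hub ((n : ℝ) + |c| + 1)
    exact ⟨p, hp, hlt⟩
  choose p hp hplarge using hch
  set a : ℕ → X := fun n => (p n).1 with ha
  set b : ℕ → X := fun n => (p n).2 with hb
  have hnormp : ∀ n, ‖p n‖ = max ‖a n‖ ‖b n‖ := fun n => rfl
  have hsubc : ∀ n, ‖a n - b n‖ ≤ c := fun n => (hp n).2.2
  have hAa : ∀ n, a n ∈ A := fun n => (hp n).1.1
  have hBb : ∀ n, b n ∈ B := fun n => (hp n).2.1.1
  have haW : ∀ n, a n ∈ Wᗮ := fun n => (hp n).1.2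
  -- ‖a n‖ large
  have halarge : ∀ n : ℕ, (n : ℝ) + 1 < ‖a n‖ := by
    intro n
    have h1 : ‖b n‖ ≤ ‖a n‖ + |c| := by
      have := norm_sub_norm_le (b n) (a n)
      have h2 : ‖b n - a n‖ ≤ c := by rw [norm_sub_rev]; exact hsubc n
      have := le_abs_self c
      linarith
    have h3 := hplarge n
    have habs := abs_nonneg c
    rw [hnormp n] at h3
    rcases max_cases ‖a n‖ ‖b n‖ with ⟨h4, _⟩ | ⟨h4, _⟩ <;> rw [h4] at h3 <;> linarith
  set t : ℕ → ℝ := fun n => ‖a n‖ with htdef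
  have htpos : ∀ n, 0 < t n := fun n => by have := halarge n; have : (0:ℝ) ≤ n := n.cast_nonneg; simp only [htdef]; linarith
  set u : ℕ → X := fun n => (t n)⁻¹ • a n with hu
  have husphere : ∀ n, u n ∈ Metric.sphere (0 : X) 1 := by
    intro n
    simp only [hu, mem_sphere_iff_norm, sub_zero, norm_smul, norm_inv, norm_norm]
    rw [Real.norm_eq_abs, abs_of_pos (htpos n)]
    exact inv_mul_cancel₀ (htpos n).ne'
  obtain ⟨v, hv, φ, hφmono, hφtend⟩ := (isCompact_sphere (0:X) 1).tendsto_subseq husphere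
  have hvnorm : ‖v‖ = 1 := by simpa using hv
  -- t (φ n) → ∞
  have httop : Tendsto (fun n => t (φ n)) atTop atTop := by
    apply tendsto_atTop_mono (fun n => ?_) tendsto_natCast_atTop_atTop
    have h1 := halarge (φ n)
    have h2 : (n : ℝ) ≤ (φ n : ℝ) := by exact_mod_cast hφmono.le_apply
    simp only [htdef]; linarith
  have hinvtend : Tendsto (fun n => (t (φ n))⁻¹) atTop (𝓝 0) :=
    httop.inv_tendsto_atTop
  -- v ∈ recCone A
  have hvA : v ∈ recCone A := by
    intro s hs
    have hmem : ∀ n, (1 - (t (φ n))⁻¹) • s + (t (φ n))⁻¹ • a (φ n) ∈ A := by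
      intro n
      refine hAconv hs (hAa (φ n)) ?_ ?_ (by ring)
      · have h1 := halarge (φ n)
        have : (1:ℝ) < t (φ n) := by have : (0:ℝ) ≤ (φ n : ℝ) := Nat.cast_nonneg _; simp only [htdef]; linarith
        have := inv_le_one_of_one_le₀ this.le
        linarith
      · exact inv_nonneg.2 (htpos (φ n)).le
    have hlim : Tendsto (fun n => (1 - (t (φ n))⁻¹) • s + (t (φ n))⁻¹ • a (φ n))
        atTop (𝓝 (v + s)) := by
      have h1 : Tendsto (fun n => (1 - (t (φ n))⁻¹ : ℝ)) atTop (𝓝 1) := by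
        simpa using (tendsto_const_nhds (x := (1:ℝ))).sub hinvtend
      have h2 : Tendsto (fun n => (t (φ n))⁻¹ • a (φ n)) atTop (𝓝 v) := hφtend
      have := (h1.smul_const s).add h2
      simpa [add_comm] using this
    exact hAcl.mem_of_tendsto hlim (Filter.Eventually.of_forall hmem)
  -- v ∈ recCone B
  have hvB : v ∈ recCone B := by
    intro s hs
    have hmem : ∀ n, (1 - (t (φ n))⁻¹) • s + (t (φ n))⁻¹ • b (φ n) ∈ B := by
      intro n
      refine hBconv hs (hBb (φ n)) ?_ ?_ (by ring)
      · have h1 := halarge (φ n)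
        have : (1:ℝ) < t (φ n) := by have : (0:ℝ) ≤ (φ n : ℝ) := Nat.cast_nonneg _; simp only [htdef]; linarith
        have := inv_le_one_of_one_le₀ this.le
        linarith
      · exact inv_nonneg.2 (htpos (φ n)).le
    have hbtend : Tendsto (fun n => (t (φ n))⁻¹ • b (φ n)) atTop (𝓝 v) := by
      have hdiff : Tendsto (fun n => (t (φ n))⁻¹ • (a (φ n) - b (φ n))) atTop (𝓝 0) := by
        have hbnd : ∀ n, ‖(t (φ n))⁻¹ • (a (φ n) - b (φ n))‖ ≤ (t (φ n))⁻¹ * c := by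
          intro n
          rw [norm_smul, norm_inv, norm_norm]
          exact mul_le_mul_of_nonneg_left (hsubc (φ n)) (inv_nonneg.2 (htpos (φ n)).le)
        exact squeeze_zero_norm hbnd (by simpa using hinvtend.mul_const c)
      have hts := hφtend.sub hdiff
      rw [sub_zero] at hts
      have heq : (fun x => (u ∘ φ) x - (t (φ x))⁻¹ • (a (φ x) - b (φ x)))
          = fun x => (t (φ x))⁻¹ • b (φ x) := by
        funext x
        simp only [Function.comp_apply, hu, smul_sub]
        abel
      rwa [heq] at hts
    have hlim : Tendsto (fun n => (1 - (t (φ n))⁻¹) • s + (t (φ n))⁻¹ • b (φ n))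
        atTop (𝓝 (v + s)) := by
      have h1 : Tendsto (fun n => (1 - (t (φ n))⁻¹ : ℝ)) atTop (𝓝 1) := by
        simpa using (tendsto_const_nhds (x := (1:ℝ))).sub hinvtend
      have := (h1.smul_const s).add hbtend
      simpa [add_comm] using this
    exact hBcl.mem_of_tendsto hlim (Filter.Eventually.of_forall hmem)
  -- v ∈ Wᗮ
  have hvWp : v ∈ Wᗮ := by
    have hcl : IsClosed (Wᗮ : Set X) := Submodule.closed_of_finiteDimensional _
    apply hcl.mem_of_tendsto hφtend
    exact Filter.Eventually.of_forall fun n => Wᗮ.smul_mem _ (haW (φ n))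
  -- v ∈ W
  have hvW : v ∈ W := by
    rw [← SetLike.mem_coe, hW]; exact ⟨hvA, hvB⟩
  have : v = 0 := by
    have := (Submodule.orthogonal_disjoint W).eq_bot ▸ Submodule.mem_inf.2 ⟨hvW, hvWp⟩
    simpa using Submodule.disjoint_def.1 W.orthogonal_disjoint v hvW hvWp
  rw [this] at hvnorm; simp at hvnorm


lemma central (A B : Set X) (hAne : A.Nonempty) (hAcl : IsClosed A) (hAconv : Convex ℝ A)
    (hBne : B.Nonempty) (hBcl : IsClosed B) (hBconv : Convex ℝ B)
    (PA PB : X → X) (hPA : IsProjector A PA) (hPB : IsProjector B PB)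
    (W : Submodule ℝ X) (hW : (W : Set X) = recCone A ∩ recCone B) :
    ∃ x : X, PB (PA x) = x := by
  -- W is contained in both recession cones
  have hWA : ∀ w ∈ W, w ∈ recCone A := fun w hw => by
    have : w ∈ recCone A ∩ recCone B := by rw [← hW]; exact hw
    exact this.1
  have hWB : ∀ w ∈ W, w ∈ recCone B := fun w hw => by
    have : w ∈ recCone A ∩ recCone B := by rw [← hW]; exact hw
    exact this.2
  -- the "shadow" map
  set Q : X → X := fun x => x - (Submodule.orthogonalProjectionOnto W x : X) with hQ
  have hQWp : ∀ x : X, Q x ∈ Wᗮ := fun x => W.sub_starProjection_mem_orthogonal x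
  have hQA : ∀ x ∈ A, Q x ∈ A := by
    intro x hx
    have hmem : -(Submodule.orthogonalProjectionOnto W x : X) ∈ W := W.neg_mem (Submodule.orthogonalProjectionOnto W x).2
    have := hWA _ hmem x hx
    simpa [hQ, sub_eq_neg_add] using this
  have hQB : ∀ x ∈ B, Q x ∈ B := by
    intro x hx
    have hmem : -(Submodule.orthogonalProjectionOnto W x : X) ∈ W := W.neg_mem (Submodule.orthogonalProjectionOnto W x).2
    have := hWB _ hmem x hx
    simpa [hQ, sub_eq_neg_add] using this
  -- contraction property of Q on differences
  have hQcontr : ∀ x y : X, ‖Q x - Q y‖ ≤ ‖x - y‖ := by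
    intro x y
    have hdecomp : x - y = (Q x - Q y) + ((Submodule.orthogonalProjectionOnto W x : X) - Submodule.orthogonalProjectionOnto W y) := by
      simp only [hQ]; abel
    have hWpmem : Q x - Q y ∈ Wᗮ := Wᗮ.sub_mem (hQWp x) (hQWp y)
    have hWmem : (Submodule.orthogonalProjectionOnto W x : X) - Submodule.orthogonalProjectionOnto W y ∈ W :=
      W.sub_mem (Submodule.orthogonalProjectionOnto W x).2 (Submodule.orthogonalProjectionOnto W y).2
    have hinner : inner ℝ (Q x - Q y) ((Submodule.orthogonalProjectionOnto W x : X) - Submodule.orthogonalProjectionOnto W y) = (0:ℝ) := by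
      rw [real_inner_comm]
      exact (Submodule.mem_orthogonal W _).1 hWpmem _ hWmem
    have hsq : ‖x - y‖^2 = ‖Q x - Q y‖^2 + ‖(Submodule.orthogonalProjectionOnto W x : X) - Submodule.orthogonalProjectionOnto W y‖^2 := by
      rw [hdecomp, norm_add_sq_real, hinner]; ring
    nlinarith [norm_nonneg (x - y), norm_nonneg (Q x - Q y),
      sq_nonneg ‖(Submodule.orthogonalProjectionOnto W x : X) - Submodule.orthogonalProjectionOnto W y‖]
  -- the compact minimization set
  obtain ⟨a0, ha0⟩ := hAne
  obtain ⟨b0, hb0⟩ := hBne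
  set c0 : ℝ := ‖Q a0 - Q b0‖ with hc0
  set S : Set (X × X) := {p : X × X | p.1 ∈ A ∩ (Wᗮ : Set X) ∧ p.2 ∈ B ∩ (Wᗮ : Set X)
      ∧ ‖p.1 - p.2‖ ≤ c0} with hS
  have hSne : (Q a0, Q b0) ∈ S := ⟨⟨hQA _ ha0, hQWp a0⟩, ⟨hQB _ hb0, hQWp b0⟩, le_refl _⟩
  have hWpcl : IsClosed (Wᗮ : Set X) := Submodule.closed_of_finiteDimensional _
  have hScl : IsClosed S := by
    apply IsClosed.inter
    · exact (hAcl.inter hWpcl).preimage continuous_fst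
    · apply IsClosed.inter
      · exact (hBcl.inter hWpcl).preimage continuous_snd
      · exact isClosed_le (continuous_fst.sub continuous_snd).norm continuous_const
  have hScompact : IsCompact S :=
    Metric.isCompact_of_isClosed_isBounded hScl
      (key_bounded A B hAcl hAconv hBcl hBconv W hW c0)
  have hfcont : Continuous (fun p : X × X => ‖p.1 - p.2‖) :=
    (continuous_fst.sub continuous_snd).norm
  obtain ⟨pstar, hpstarS, hmin⟩ := hScompact.exists_isMinOn ⟨_, hSne⟩ hfcont.continuousOn
  set m : ℝ := ‖pstar.1 - pstar.2‖ with hm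
  have hmc0 : m ≤ c0 := hmin hSne
  have hastarA : pstar.1 ∈ A := hpstarS.1.1
  have hbstarB : pstar.2 ∈ B := hpstarS.2.1.1
  -- global minimality
  have glob : ∀ a ∈ A, ∀ b ∈ B, m ≤ ‖a - b‖ := by
    intro a haA b hbB
    have h1 : ‖Q a - Q b‖ ≤ ‖a - b‖ := hQcontr a b
    by_cases h : ‖Q a - Q b‖ ≤ c0
    · have hmem : (Q a, Q b) ∈ S := ⟨⟨hQA _ haA, hQWp a⟩, ⟨hQB _ hbB, hQWp b⟩, h⟩
      have := hmin hmem
      exact le_trans this h1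
    · push_neg at h
      linarith
  -- fixed point construction
  set a1 : X := pstar.1 with ha1
  set b1 : X := PB a1 with hb1
  have hb1B : b1 ∈ B := (hPB a1).1
  have h1 : ‖a1 - b1‖ = m := by
    apply le_antisymm
    · exact (hPB a1).2 _ hbstarB
    · exact glob _ hastarA _ hb1B
  set a2 : X := PA b1 with ha2
  have ha2A : a2 ∈ A := (hPA b1).1
  have h2 : ‖b1 - a2‖ = m := by
    apply le_antisymm
    · calc ‖b1 - a2‖ ≤ ‖b1 - a1‖ := (hPA b1).2 _ hastarA
        _ = m := by rw [norm_sub_rev]; exact h1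
    · rw [norm_sub_rev]; exact glob _ ha2A _ hb1B
  set b2 : X := PB a2 with hb2
  have hb2B : b2 ∈ B := (hPB a2).1
  have h3 : ‖a2 - b2‖ = m := by
    apply le_antisymm
    · calc ‖a2 - b2‖ ≤ ‖a2 - b1‖ := (hPB a2).2 _ hb1B
        _ = m := by rw [norm_sub_rev]; exact h2
    · exact glob _ ha2A _ hb2B
  -- uniqueness via parallelogram: b2 = b1
  have hb21 : b2 = b1 := by
    have hmid : (1/2 : ℝ) • b1 + (1/2 : ℝ) • b2 ∈ B :=
      hBconv hb1B hb2B (by norm_num) (by norm_num) (by norm_num)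
    have hmidge : m ≤ ‖a2 - ((1/2 : ℝ) • b1 + (1/2 : ℝ) • b2)‖ := glob _ ha2A _ hmid
    have hpar := parallelogram_law_with_norm ℝ (a2 - b1) (a2 - b2)
    have hx : ‖a2 - b1‖ = m := by rw [norm_sub_rev]; exact h2
    have hmideq : a2 - ((1/2 : ℝ) • b1 + (1/2 : ℝ) • b2)
        = (1/2 : ℝ) • ((a2 - b1) + (a2 - b2)) := by module
    have hdiff : (a2 - b1) - (a2 - b2) = b2 - b1 := by abel
    rw [hdiff] at hpar
    have hnm : ‖a2 - ((1/2 : ℝ) • b1 + (1/2 : ℝ) • b2)‖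
        = (1/2 : ℝ) * ‖(a2 - b1) + (a2 - b2)‖ := by
      rw [hmideq, norm_smul]; norm_num
    have hb12 : ‖b2 - b1‖ = 0 := by
      nlinarith [hpar, hx, h3, hmidge, hnm, norm_nonneg (a2 - b1), norm_nonneg (b2 - b1),
        sq_nonneg (‖(a2 - b1) + (a2 - b2)‖ - 2*m)]
    have := norm_eq_zero.1 hb12
    exact sub_eq_zero.1 this
  exact ⟨b1, by rw [← ha2, ← hb2, hb21]⟩


/-- For fixed-point free `T = P_B ∘ P_A` and `R = rec A ∩ rec B`,
neither `R` nor `R^⊕` is a linear subspace of `X`. -/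
theorem stmt11 (A B : Set X) (hAne : A.Nonempty) (hAcl : IsClosed A) (hAconv : Convex ℝ A)
    (hBne : B.Nonempty) (hBcl : IsClosed B) (hBconv : Convex ℝ B)
    (PA PB : X → X) (hPA : IsProjector A PA) (hPB : IsProjector B PB)
    (T : X → X) (hT : T = PB ∘ PA) (hfix : ∀ x : X, T x ≠ x)
    (R : Set X) (hR : R = recCone A ∩ recCone B) :
    (¬∃ W : Submodule ℝ X, (W : Set X) = R) ∧
    (¬∃ W : Submodule ℝ X, (W : Set X) = plusCone R) := by
  have hfix' : ∀ x : X, PB (PA x) ≠ x := by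
    intro x
    have := hfix x
    rwa [hT] at this
  constructor
  · rintro ⟨W, hWeq⟩
    obtain ⟨x, hx⟩ := central A B hAne hAcl hAconv hBne hBcl hBconv PA PB hPA hPB W
      (hWeq.trans hR)
    exact hfix' x hx
  · rintro ⟨W, hWeq⟩
    -- R is a nonempty closed convex cone
    have hRcl : IsClosed R := by
      rw [hR]; exact (recCone_isClosed hAcl).inter (recCone_isClosed hBcl)
    have hRzero : (0 : X) ∈ R := by rw [hR]; exact ⟨recCone_zero_mem, recCone_zero_mem⟩
    set K : ConvexCone ℝ X :=
      { carrier := R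
        smul_mem' := by
          intro c hc x hx
          rw [hR] at hx ⊢
          exact ⟨recCone_smul hAconv hx.1 hc.le, recCone_smul hBconv hx.2 hc.le⟩
        add_mem' := by
          intro x hx y hy
          rw [hR] at hx hy ⊢
          exact ⟨recCone_add hx.1 hy.1, recCone_add hx.2 hy.2⟩ } with hK
    have hKset : (K : Set X) = R := rfl
    -- plusCone R is the inner dual cone of R
    have hdual : (ProperCone.innerDual R : Set X) = plusCone R := by
      ext y
      simp only [SetLike.mem_coe, ProperCone.mem_innerDual, plusCone, Set.mem_setOf_eq]
      constructor
      · intro h s hs; rw [real_inner_comm]; exact h hs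
      · intro h s hs; rw [real_inner_comm]; exact h s hs
    -- bipolar theorem
    let C : ProperCone ℝ X := { toSubmodule := K.toPointedCone hRzero, isClosed' := hRcl }
    have hCset : (C : Set X) = R := rfl
    have hbip := ProperCone.innerDual_innerDual C
    -- hence R = {y | ∀ x ∈ W, 0 ≤ ⟪x, y⟫}
    have hWset : (ProperCone.innerDual (C : Set X) : Set X) = (W : Set X) := by
      rw [hCset, hdual, hWeq]
    have hRW : R = (ProperCone.innerDual (W : Set X) : Set X) := by
      conv_lhs => rw [← hCset, ← hbip]
      rw [hWset]
    -- that set is Wᗮ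
    have horth : (ProperCone.innerDual (W : Set X) : Set X) = (Wᗮ : Set X) := by
      ext y
      simp only [SetLike.mem_coe, ProperCone.mem_innerDual]
      constructor
      · intro h
        rw [Submodule.mem_orthogonal]
        intro u hu
        have h1 := h hu
        have h2 := h (W.neg_mem hu)
        rw [inner_neg_left] at h2
        linarith
      · intro hy x hx
        rw [(Submodule.mem_orthogonal W y).1 hy x hx]
    have hfinal : ((Wᗮ : Submodule ℝ X) : Set X) = recCone A ∩ recCone B := by
      rw [← horth, ← hRW, hR]
    obtain ⟨x, hx⟩ := central A B hAne hAcl hAconv hBne hBcl hBconv PA PB hPA hPB Wᗮ hfinal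
    exact hfix' x hx
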